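/- Let n ≥ 4 and let A ∈ GL(n+1,ℂ) be the block-diagonal matrix consisting of two 2×2 upper-triangular Jordan blocks with eigenvalue 1 followed by the (n−3)×(n−3) identity matrix. Then there exist no λ ∈ ℂ \ {0} and no g ∈ GL(n+1,ℂ) such that g (λA) g⁻¹ ∈ U(1,n). In particular, the projective transformation of ℙⁿ induced by A is not conjugate in PGL(n+1,ℂ) to any element of PU(1,n). -/

import Mathlib

open Matrix

noncomputable section

/-- The Hermitian form `⟨u,v⟩_{1,n} = −u₁ conj(v₁) + ∑_{j≥2} u_j conj(v_j)` on `ℂ^{n+1}`. -/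
def hform1n (n : ℕ) (u v : Fin (n + 1) → ℂ) : ℂ :=
  -(u 0 * starRingEnd ℂ (v 0)) + ∑ j : Fin n, u j.succ * starRingEnd ℂ (v j.succ)

/-- The block-diagonal matrix made of two `2×2` Jordan blocks `[[1,1],[0,1]]` followed
by the identity matrix: entry `(i,j)` is 1 if `i = j` or `(i,j) ∈ {(0,1),(2,3)}`,
and 0 otherwise. -/
def twoJordanBlocks (n : ℕ) : Matrix (Fin (n + 1)) (Fin (n + 1)) ℂ :=
  Matrix.of fun i j => if j = i then 1
    else if ((i : ℕ) = 0 ∧ (j : ℕ) = 1) ∨ ((i : ℕ) = 2 ∧ (j : ℕ) = 3) then 1 else 0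


lemma h_add_r (n : ℕ) (u v v' : Fin (n+1) → ℂ) :
    hform1n n u (v + v') = hform1n n u v + hform1n n u v' := by
  simp [hform1n, mul_add, Finset.sum_add_distrib]; ring

lemma h_smul_l (n : ℕ) (s : ℂ) (u v : Fin (n+1) → ℂ) :
    hform1n n (s • u) v = s * hform1n n u v := by
  simp only [hform1n, Pi.smul_apply, smul_eq_mul, Finset.mul_sum, mul_add, mul_neg]
  congr 1; · ring
  · exact Finset.sum_congr rfl (fun _ _ => by ring)

lemma h_smul_r (n : ℕ) (s : ℂ) (u v : Fin (n+1) → ℂ) :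
    hform1n n u (s • v) = starRingEnd ℂ s * hform1n n u v := by
  simp only [hform1n, Pi.smul_apply, smul_eq_mul, _root_.map_mul, Finset.mul_sum, mul_add, mul_neg]
  congr 1; · ring
  · exact Finset.sum_congr rfl (fun _ _ => by ring)

lemma h_sub_l (n : ℕ) (u u' v : Fin (n+1) → ℂ) :
    hform1n n (u - u') v = hform1n n u v - hform1n n u' v := by
  simp [hform1n, sub_mul, Finset.sum_sub_distrib]; ring

lemma h_sub_r (n : ℕ) (u v v' : Fin (n+1) → ℂ) :
    hform1n n u (v - v') = hform1n n u v - hform1n n u v' := by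
  simp [hform1n, mul_sub, Finset.sum_sub_distrib]; ring

lemma mulA (n : ℕ) (hn : 4 ≤ n) (x : Fin (n+1) → ℂ) :
    (twoJordanBlocks n) *ᵥ x = fun i => x i +
      (if (i : ℕ) = 0 then x ⟨1, by omega⟩ else if (i : ℕ) = 2 then x ⟨3, by omega⟩ else 0) := by
  funext i
  have key : ∀ j : Fin (n+1), twoJordanBlocks n i j * x j =
      (if j = i then x j else 0) +
      (if ((i:ℕ) = 0 ∧ (j:ℕ) = 1) ∨ ((i:ℕ) = 2 ∧ (j:ℕ) = 3) then x j else 0) := by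
    intro j
    by_cases h1 : j = i
    · subst h1
      have h2 : ¬ (((j:ℕ) = 0 ∧ (j:ℕ) = 1) ∨ ((j:ℕ) = 2 ∧ (j:ℕ) = 3)) := by
        rintro (⟨a,b⟩|⟨a,b⟩) <;> omega
      simp [twoJordanBlocks, h2]
      intro h3; exfalso
      rcases h3 with ⟨a,b⟩|⟨a,b⟩
      · subst a; simp at b
      · omega
    · by_cases h2 : ((i:ℕ) = 0 ∧ (j:ℕ) = 1) ∨ ((i:ℕ) = 2 ∧ (j:ℕ) = 3)
      · simp [twoJordanBlocks, h1, h2]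
      · simp [twoJordanBlocks, h1, h2]
  simp only [mulVec, dotProduct, key, Finset.sum_add_distrib, Finset.sum_ite_eq' Finset.univ i,
    Finset.mem_univ, if_true]
  congr 1
  by_cases h0 : (i : ℕ) = 0
  · have hiff : ∀ j : Fin (n+1), (((i:ℕ) = 0 ∧ (j:ℕ) = 1) ∨ ((i:ℕ) = 2 ∧ (j:ℕ) = 3)) ↔ j = ⟨1, by omega⟩ := by
      intro j; constructor
      · rintro (⟨a,b⟩|⟨a,b⟩) <;> [exact Fin.ext b; omega]
      · rintro rfl; left; exact ⟨h0, rfl⟩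
    rw [if_pos h0, Finset.sum_congr rfl (fun j _ => if_congr (hiff j) rfl rfl),
      Finset.sum_ite_eq' Finset.univ]
    simp
  · by_cases h2 : (i : ℕ) = 2
    · have hiff : ∀ j : Fin (n+1), (((i:ℕ) = 0 ∧ (j:ℕ) = 1) ∨ ((i:ℕ) = 2 ∧ (j:ℕ) = 3)) ↔ j = ⟨3, by omega⟩ := by
        intro j; constructor
        · rintro (⟨a,b⟩|⟨a,b⟩) <;> [omega; exact Fin.ext b]
        · rintro rfl; right; exact ⟨h2, rfl⟩
      rw [if_neg h0, if_pos h2, Finset.sum_congr rfl (fun j _ => if_congr (hiff j) rfl rfl),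
        Finset.sum_ite_eq' Finset.univ]
      simp
    · have hno : ∀ j : Fin (n+1), ¬(((i:ℕ) = 0 ∧ (j:ℕ) = 1) ∨ ((i:ℕ) = 2 ∧ (j:ℕ) = 3)) := by
        rintro j (⟨a,b⟩|⟨a,b⟩) <;> omega
      rw [if_neg h0, if_neg h2, Finset.sum_congr rfl (fun j _ => if_neg (hno j))]
      simp

/-- A² x = 2 (A x) − x. -/
lemma mulAA (n : ℕ) (hn : 4 ≤ n) (x : Fin (n+1) → ℂ) :
    (twoJordanBlocks n) *ᵥ ((twoJordanBlocks n) *ᵥ x)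
      = (2:ℂ) • ((twoJordanBlocks n) *ᵥ x) - x := by
  rw [mulA n hn x, mulA n hn]
  funext i
  simp only [Pi.sub_apply, Pi.smul_apply, smul_eq_mul]
  split_ifs <;> first
    | (exfalso; simp_all; done)
    | (exfalso; omega)
    | ring

/-- Vectors with zero 0-th coordinate and zero self-pairing vanish. -/
lemma h_null (n : ℕ) (w : Fin (n+1) → ℂ) (h0 : w 0 = 0) (hw : hform1n n w w = 0) :
    w = 0 := by
  have hsum : ∑ j : Fin n, w j.succ * starRingEnd ℂ (w j.succ) = 0 := by
    simpa [hform1n, h0] using hw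
  have hsum' : ∑ j : Fin n, Complex.normSq (w j.succ) = (0:ℝ) := by
    have : ((∑ j : Fin n, Complex.normSq (w j.succ) : ℝ) : ℂ) = 0 := by
      push_cast
      rw [← hsum]
      exact Finset.sum_congr rfl (fun j _ => (Complex.mul_conj (w j.succ)).symm)
    exact_mod_cast this
  have hz : ∀ j : Fin n, Complex.normSq (w j.succ) = 0 := by
    intro j
    have := (Finset.sum_eq_zero_iff_of_nonneg
      (fun i _ => Complex.normSq_nonneg (w i.succ))).mp hsum' j (Finset.mem_univ j)
    exact this
  funext i
  rcases Fin.eq_zero_or_eq_succ i with rfl | ⟨j, rfl⟩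
  · exact h0
  · simpa using Complex.normSq_eq_zero.mp (hz j)

/-- For `n ≥ 4`, no nonzero scalar multiple of the matrix
`twoJordanBlocks n` is conjugate in `GL(n+1,ℂ)` to an element of `U(1,n)`; in
particular the induced projective transformation of `ℙⁿ` is not conjugate in
`PGL(n+1,ℂ)` to an element of `PU(1,n)`. -/
theorem stmt16 (n : ℕ) (hn : 4 ≤ n) :
    ¬ ∃ c : ℂ, c ≠ 0 ∧ ∃ g : GL (Fin (n + 1)) ℂ,
      ∀ u v : Fin (n + 1) → ℂ,
        hform1n n
          (((↑g : Matrix (Fin (n + 1)) (Fin (n + 1)) ℂ) * (c • twoJordanBlocks n) *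
            (↑(g⁻¹) : Matrix (Fin (n + 1)) (Fin (n + 1)) ℂ)).mulVec u)
          (((↑g : Matrix (Fin (n + 1)) (Fin (n + 1)) ℂ) * (c • twoJordanBlocks n) *
            (↑(g⁻¹) : Matrix (Fin (n + 1)) (Fin (n + 1)) ℂ)).mulVec v) =
        hform1n n u v := by
  rintro ⟨c, hc, g, h⟩
  set A := twoJordanBlocks n with hA
  set G : Matrix (Fin (n+1)) (Fin (n+1)) ℂ := ↑g with hG
  set Gi : Matrix (Fin (n+1)) (Fin (n+1)) ℂ := ↑(g⁻¹) with hGi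
  have hGiG : Gi * G = 1 := by rw [hG, hGi]; exact_mod_cast g.inv_mul
  have hGGi : G * Gi = 1 := by rw [hG, hGi]; exact_mod_cast g.mul_inv
  -- the conjugated matrix acting on G-images
  have hM : ∀ x, (G * (c • A) * Gi) *ᵥ (G *ᵥ x) = c • (G *ᵥ (A *ᵥ x)) := by
    intro x
    rw [mulVec_mulVec, mul_assoc, hGiG, mul_one, ← mulVec_mulVec, smul_mulVec,
      mulVec_smul]
  have hA' : ∀ x y, (c * starRingEnd ℂ c) *
      hform1n n (G *ᵥ (A *ᵥ x)) (G *ᵥ (A *ᵥ y)) = hform1n n (G *ᵥ x) (G *ᵥ y) := by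
    intro x y
    have hh := h (G *ᵥ x) (G *ᵥ y)
    rw [hM x, hM y, h_smul_l, h_smul_r] at hh
    rw [← hh]; ring
  -- square and cube identities in the right shape
  have h2 : ∀ z, A *ᵥ (A *ᵥ z) = (2:ℂ) • (A *ᵥ z) - (1:ℂ) • z := by
    intro z; rw [mulAA n hn z, one_smul]
  have h3 : ∀ z, A *ᵥ (A *ᵥ (A *ᵥ z)) = (3:ℂ) • (A *ᵥ z) - (2:ℂ) • z := by
    intro z
    rw [mulAA n hn (A *ᵥ z), mulAA n hn z]
    funext i
    simp only [Pi.sub_apply, Pi.smul_apply, smul_eq_mul]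
    ring
  -- sesquilinear expansion
  have hexp : ∀ (a b : ℂ) (u x v y : Fin (n+1) → ℂ),
      hform1n n (G *ᵥ (a • u - b • x)) (G *ᵥ (a • v - b • y)) =
        a * starRingEnd ℂ a * hform1n n (G *ᵥ u) (G *ᵥ v)
        - a * starRingEnd ℂ b * hform1n n (G *ᵥ u) (G *ᵥ y)
        - b * starRingEnd ℂ a * hform1n n (G *ᵥ x) (G *ᵥ v)
        + b * starRingEnd ℂ b * hform1n n (G *ᵥ x) (G *ᵥ y) := by
    intro a b u x v y
    rw [mulVec_sub, mulVec_smul, mulVec_smul, mulVec_sub, mulVec_smul, mulVec_smul]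
    simp only [h_sub_l, h_sub_r, h_smul_l, h_smul_r]
    ring
  have hGG : ∀ w, G *ᵥ (Gi *ᵥ w) = w := by
    intro w; rw [mulVec_mulVec, hGGi, one_mulVec]
  -- Step 1 : |c|² = 1
  have hr : c * starRingEnd ℂ c = 1 := by
    by_contra hr1
    have hzero : ∀ x y, hform1n n (G *ᵥ x) (G *ᵥ y) = 0 := by
      intro x y
      have e1 := hA' x y
      have e2 := hA' (A *ᵥ x) (A *ᵥ y)
      have e3 := hA' (A *ᵥ (A *ᵥ x)) (A *ᵥ (A *ᵥ y))
      rw [h2 x, h2 y, hexp] at e2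
      rw [h3 x, h3 y, h2 x, h2 y, hexp, hexp] at e3
      simp only [map_ofNat, _root_.map_one] at e2 e3
      have hkey : hform1n n (G *ᵥ x) (G *ᵥ y) * (c * starRingEnd ℂ c - 1)^3 = 0 := by
        linear_combination (3*(c*starRingEnd ℂ c)^2 - 3*(c*starRingEnd ℂ c) + 1) * e1
          + ((c*starRingEnd ℂ c) - 3*(c*starRingEnd ℂ c)^2) * e2
          + (c*starRingEnd ℂ c)^2 * e3
      rcases mul_eq_zero.mp hkey with h0 | h0
      · exact h0
      · exact absurd h0 (pow_ne_zero _ (sub_ne_zero.mpr hr1))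
    have hz := hzero (Gi *ᵥ (Pi.single 0 1)) (Gi *ᵥ (Pi.single 0 1))
    rw [hGG] at hz
    simp [hform1n, Fin.succ_ne_zero, Pi.single_eq_of_ne] at hz
  -- Step 2 : the invariant form and the isotropic plane
  have hA1 : ∀ x y, hform1n n (G *ᵥ (A *ᵥ x)) (G *ᵥ (A *ᵥ y))
      = hform1n n (G *ᵥ x) (G *ᵥ y) := by
    intro x y
    have := hA' x y
    rwa [hr, one_mul] at this
  set i1 : Fin (n+1) := ⟨1, by omega⟩ with hi1
  set i2 : Fin (n+1) := ⟨2, by omega⟩ with hi2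
  set i3 : Fin (n+1) := ⟨3, by omega⟩ with hi3
  set d0 : Fin (n+1) → ℂ := Pi.single 0 1 with hd0
  set d1 : Fin (n+1) → ℂ := Pi.single i1 1 with hd1
  set d2 : Fin (n+1) → ℂ := Pi.single i2 1 with hd2
  set d3 : Fin (n+1) → ℂ := Pi.single i3 1 with hd3
  have hb0 : A *ᵥ d0 = d0 := by
    rw [hA, mulA n hn]
    funext i
    simp only [hd0, Pi.single_apply, Fin.ext_iff, Fin.val_zero]
    split_ifs <;> first | (exfalso; assumption) | omega | norm_num | ring
  have hb1 : A *ᵥ d1 = d0 + d1 := by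
    rw [hA, mulA n hn]
    funext i
    simp only [hd0, hd1, hi1, Pi.add_apply, Pi.single_apply, Fin.ext_iff, Fin.val_zero]
    split_ifs <;> first | (exfalso; assumption) | omega | norm_num | ring
  have hb2 : A *ᵥ d2 = d2 := by
    rw [hA, mulA n hn]
    funext i
    simp only [hd2, hi2, Pi.single_apply, Fin.ext_iff]
    split_ifs <;> first | (exfalso; assumption) | omega | norm_num | ring
  have hb3 : A *ᵥ d3 = d2 + d3 := by
    rw [hA, mulA n hn]
    funext i
    simp only [hd2, hd3, hi2, hi3, Pi.add_apply, Pi.single_apply, Fin.ext_iff]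
    split_ifs <;> first | (exfalso; assumption) | omega | norm_num | ring
  have s00 : hform1n n (G *ᵥ d0) (G *ᵥ d0) = 0 := by
    have e := hA1 d0 d1
    rw [hb0, hb1, mulVec_add, h_add_r] at e
    linear_combination e
  have s22 : hform1n n (G *ᵥ d2) (G *ᵥ d2) = 0 := by
    have e := hA1 d2 d3
    rw [hb2, hb3, mulVec_add, h_add_r] at e
    linear_combination e
  have s02 : hform1n n (G *ᵥ d0) (G *ᵥ d2) = 0 := by
    have e := hA1 d0 d3
    rw [hb0, hb3, mulVec_add, h_add_r] at e
    linear_combination e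
  have s20 : hform1n n (G *ᵥ d2) (G *ᵥ d0) = 0 := by
    have e := hA1 d2 d1
    rw [hb2, hb1, mulVec_add, h_add_r] at e
    linear_combination e
  -- final contradiction
  have hGd : ∀ w, Gi *ᵥ (G *ᵥ w) = w := by
    intro w; rw [mulVec_mulVec, hGiG, one_mulVec]
  set a : ℂ := (G *ᵥ d0) 0 with ha'
  set b : ℂ := (G *ᵥ d2) 0 with hb'
  by_cases ha : a = 0
  · have hw1 : G *ᵥ d0 = 0 := h_null n _ (by rw [← ha']; exact ha) s00
    have : d0 = 0 := by rw [← hGd d0, hw1, mulVec_zero]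
    have h01 : d0 0 = 0 := by rw [this]; rfl
    simp [hd0] at h01
  · set z : Fin (n+1) → ℂ := b • (G *ᵥ d0) - a • (G *ᵥ d2) with hzdef
    have hz0 : z 0 = 0 := by
      simp only [hzdef, Pi.sub_apply, Pi.smul_apply, smul_eq_mul, ← ha', ← hb']
      ring
    have hzz : hform1n n z z = 0 := by
      simp only [hzdef, h_sub_l, h_sub_r, h_smul_l, h_smul_r, s00, s02, s20, s22]
      ring
    have hz := h_null n z hz0 hzz
    have hlin : b • d0 - a • d2 = 0 := by
      have : Gi *ᵥ z = 0 := by rw [hz, mulVec_zero]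
      rw [hzdef, mulVec_sub, mulVec_smul, mulVec_smul, hGd, hGd] at this
      exact this
    have := congrFun hlin i2
    simp only [Pi.sub_apply, Pi.smul_apply, smul_eq_mul, hd0, hd2, Pi.zero_apply] at this
    rw [Pi.single_eq_same, Pi.single_eq_of_ne (by simp [hi2, Fin.ext_iff]) 1] at this
    simp at this
    exact ha this
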